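/- Let γ > 1, ε > 0, and k : (0,∞)×(0,∞) → ℝ be homogeneous of degree γ (i.e. k(t, ts) = t^γ k(1,s)) with k(1,·) ∈ L^{1+ε}(0,1). Define κ(t,s) := k(t^{1/γ}, s^{1/γ}) / (γ s^{(γ−1)/γ}). Then κ is homogeneous of degree 1/γ and there exists δ ∈ (0, ε) such that κ(1,·) ∈ L^{1+δ}(0,1). -/

import Mathlib

open MeasureTheory Set

/-- If `k` is homogeneous of degree `γ > 1` with `k(1,·) ∈ L^{1+ε}(0,1)`, then
`κ(t,s) := k(t^{1/γ}, s^{1/γ}) / (γ s^{(γ-1)/γ})` is homogeneous of degree `1/γ` and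
`κ(1,·) ∈ L^{1+δ}(0,1)` for some `δ ∈ (0, ε)`. -/
theorem statement17 (γ ε : ℝ) (hγ : 1 < γ) (hε : 0 < ε)
    (k : ℝ → ℝ → ℝ)
    (hhom : ∀ t : ℝ, 0 < t → ∀ s ∈ Set.Ioo (0:ℝ) 1, k t (t * s) = t ^ γ * k 1 s)
    (hkL : IntegrableOn (fun s => |k 1 s| ^ (1 + ε)) (Set.Ioo (0:ℝ) 1)) :
    (∀ t : ℝ, 0 < t → ∀ s ∈ Set.Ioo (0:ℝ) 1,
      (fun t s => k (t ^ (1/γ)) (s ^ (1/γ)) / (γ * s ^ ((γ - 1)/γ))) t (t * s) =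
        t ^ (1/γ) * (fun t s => k (t ^ (1/γ)) (s ^ (1/γ)) / (γ * s ^ ((γ - 1)/γ))) 1 s) ∧
    ∃ δ ∈ Set.Ioo 0 ε,
      IntegrableOn
        (fun s => |k (1 ^ (1/γ)) (s ^ (1/γ)) / (γ * s ^ ((γ - 1)/γ))| ^ (1 + δ))
        (Set.Ioo (0:ℝ) 1) := by
  constructor
  have hγ0 : (0:ℝ) < γ := by linarith
  intro t ht s hs
  obtain ⟨hs0, hs1⟩ := hs
  simp only [Real.one_rpow]
  have h1γ : 0 < 1/γ := by positivity
  have hts : (t*s) ^ (1/γ) = t ^ (1/γ) * s ^ (1/γ) := Real.mul_rpow ht.le hs0.le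
  have hts' : (t*s) ^ ((γ-1)/γ) = t ^ ((γ-1)/γ) * s ^ ((γ-1)/γ) := Real.mul_rpow ht.le hs0.le
  have hsmem : s ^ (1/γ) ∈ Set.Ioo (0:ℝ) 1 :=
    ⟨Real.rpow_pos_of_pos hs0 _, Real.rpow_lt_one hs0.le hs1 h1γ⟩
  have hk := hhom (t ^ (1/γ)) (Real.rpow_pos_of_pos ht _) _ hsmem
  have htγ : (t ^ (1/γ)) ^ γ = t := by
    rw [← Real.rpow_mul ht.le, one_div, inv_mul_cancel₀ hγ0.ne', Real.rpow_one]
  have htsplit : t ^ (1/γ) * t ^ ((γ-1)/γ) = t := by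
    rw [← Real.rpow_add ht]
    rw [show 1/γ + (γ-1)/γ = 1 by field_simp; ring]
    exact Real.rpow_one t
  rw [hts, hk, htγ, hts']
  have h1 : t ^ ((γ-1)/γ) ≠ 0 := (Real.rpow_pos_of_pos ht _).ne'
  have h2 : s ^ ((γ-1)/γ) ≠ 0 := (Real.rpow_pos_of_pos hs0 _).ne'
  nth_rewrite 1 [← htsplit]
  field_simp
  have hγ0 : (0:ℝ) < γ := by linarith
  have hγ1 : (0:ℝ) < γ - 1 := by linarith
  -- choice of δ
  set δ : ℝ := min (ε/2) (ε / (4*(γ-1)*(1+ε))) with hδdef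
  have hδpos : 0 < δ := lt_min (by positivity) (by positivity)
  have hδε2 : δ ≤ ε/2 := min_le_left _ _
  have hδε : δ < ε := lt_of_le_of_lt hδε2 (by linarith)
  refine ⟨δ, ⟨hδpos, hδε⟩, ?_⟩
  -- conjugate exponents
  set p : ℝ := (1+ε)/(1+δ) with hpdef
  set q : ℝ := (1+ε)/(ε-δ) with hqdef
  have hεδ : 0 < ε - δ := by linarith
  have hp1 : 1 < p := by
    rw [hpdef, lt_div_iff₀ (by linarith)]; linarith
  have hpq : p.HolderConjugate q := by
    constructor
    · rw [hpdef, hqdef, inv_div, inv_div, inv_one, ← add_div,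
        show 1+δ+(ε-δ) = 1+ε by ring, div_self (ne_of_gt (by linarith))]
    · linarith
    · rw [hqdef]; exact div_pos (by linarith) hεδ
  have hp0 : 0 < p := hpq.pos
  have hq0 : 0 < q := hpq.symm.pos
  have hqle : q ≤ 2*(1+ε)/ε := by
    rw [hqdef, div_le_div_iff₀ hεδ hε]
    nlinarith
  -- the key exponent bound
  have hr : δ * q * (γ - 1) ≤ 1/2 := by
    have h1 : δ ≤ ε / (4*(γ-1)*(1+ε)) := min_le_right _ _
    have h2 : δ * q ≤ (ε / (4*(γ-1)*(1+ε))) * (2*(1+ε)/ε) := by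
      apply mul_le_mul h1 hqle hq0.le (by positivity)
    have h3 : (ε / (4*(γ-1)*(1+ε))) * (2*(1+ε)/ε) = 1/(2*(γ-1)) := by
      field_simp; ring
    rw [h3] at h2
    calc δ * q * (γ-1) ≤ (1/(2*(γ-1))) * (γ-1) := by nlinarith
    _ = 1/2 := by field_simp
  have hpd : (1+δ) * p = 1 + ε := by
    rw [hpdef]; field_simp
  -- change of variables u ↦ u ^ γ
  have himg : (fun u : ℝ => u ^ γ) '' Set.Ioo 0 1 = Set.Ioo (0:ℝ) 1 := by
    ext s
    constructor
    · rintro ⟨u, ⟨hu0, hu1⟩, rfl⟩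
      exact ⟨Real.rpow_pos_of_pos hu0 _, Real.rpow_lt_one hu0.le hu1 hγ0⟩
    · rintro ⟨hs0, hs1⟩
      refine ⟨s ^ (1/γ), ⟨Real.rpow_pos_of_pos hs0 _,
        Real.rpow_lt_one hs0.le hs1 (by positivity)⟩, ?_⟩
      show (s ^ (1/γ)) ^ γ = s
      rw [← Real.rpow_mul hs0.le, one_div, inv_mul_cancel₀ hγ0.ne', Real.rpow_one]
  have hderiv : ∀ x ∈ Set.Ioo (0:ℝ) 1,
      HasDerivWithinAt (fun u : ℝ => u ^ γ) (γ * x ^ (γ-1)) (Set.Ioo 0 1) x := fun x hx =>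
    (Real.hasDerivAt_rpow_const (Or.inl hx.1.ne')).hasDerivWithinAt
  have hinj : Set.InjOn (fun u : ℝ => u ^ γ) (Set.Ioo 0 1) := by
    intro a ha b hb hab
    exact Real.rpow_left_injOn hγ0.ne' (le_of_lt ha.1) (le_of_lt hb.1) hab
  rw [← himg, integrableOn_image_iff_integrableOn_abs_deriv_smul measurableSet_Ioo hderiv hinj]
  -- simplify the integrand on Ioo 0 1
  have hcongr : ∀ u ∈ Set.Ioo (0:ℝ) 1,
      |γ * u ^ (γ-1)| • (fun s => |k (1 ^ (1/γ)) (s ^ (1/γ)) / (γ * s ^ ((γ - 1)/γ))| ^ (1 + δ)) (u ^ γ)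
        = |k 1 u| ^ (1+δ) * (γ * u ^ (γ-1)) ^ (-δ) := by
    intro u ⟨hu0, hu1⟩
    have hA : 0 < γ * u ^ (γ-1) := by positivity
    have e1 : (u ^ γ) ^ (1/γ) = u := by
      rw [← Real.rpow_mul hu0.le, mul_one_div, div_self hγ0.ne', Real.rpow_one]
    have e2 : (u ^ γ) ^ ((γ-1)/γ) = u ^ (γ-1) := by
      rw [← Real.rpow_mul hu0.le, mul_div_assoc', mul_comm, mul_div_assoc, div_self hγ0.ne',
        mul_one]
    simp only [Real.one_rpow, smul_eq_mul, e1, e2]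
    rw [abs_div, abs_of_pos hA, Real.div_rpow (abs_nonneg _) hA.le]
    calc γ * u ^ (γ-1) * (|k 1 u| ^ (1+δ) / (γ * u ^ (γ-1)) ^ (1+δ))
        = |k 1 u| ^ (1+δ) * ((γ * u ^ (γ-1)) ^ (1:ℝ) / (γ * u ^ (γ-1)) ^ (1+δ)) := by
          rw [Real.rpow_one]; ring
      _ = |k 1 u| ^ (1+δ) * (γ * u ^ (γ-1)) ^ ((1:ℝ) - (1+δ)) := by
          rw [Real.rpow_sub hA]
      _ = |k 1 u| ^ (1+δ) * (γ * u ^ (γ-1)) ^ (-δ) := by ring_nf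
  rw [integrableOn_congr_fun hcongr measurableSet_Ioo]
  -- measurability
  have hF := hkL.aestronglyMeasurable
  have habs : AEStronglyMeasurable (fun s => |k 1 s|) (volume.restrict (Set.Ioo 0 1)) := by
    have hc : Continuous (fun x : ℝ => x ^ (1+ε)⁻¹) :=
      Real.continuous_rpow_const (by positivity)
    refine (hc.comp_aestronglyMeasurable hF).congr (Filter.Eventually.of_forall fun s => ?_)
    show (|k 1 s| ^ (1+ε)) ^ (1+ε)⁻¹ = |k 1 s|
    rw [← Real.rpow_mul (abs_nonneg _), mul_inv_cancel₀ (by positivity), Real.rpow_one]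
  have hh1 : AEStronglyMeasurable (fun s => |k 1 s| ^ (1+δ)) (volume.restrict (Set.Ioo 0 1)) :=
    (Real.continuous_rpow_const (by positivity)).comp_aestronglyMeasurable habs
  have hh2 : AEStronglyMeasurable (fun u : ℝ => (γ * u ^ (γ-1)) ^ (-δ))
      (volume.restrict (Set.Ioo 0 1)) := by
    have hco : ContinuousOn (fun u : ℝ => (γ * u ^ (γ-1)) ^ (-δ)) (Set.Ioo 0 1) := by
      apply ContinuousOn.rpow_const
      · exact (continuous_const.mul (Real.continuous_rpow_const hγ1.le)).continuousOn
      · intro x hx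
        left
        have : 0 < γ * x ^ (γ-1) := by
          have := hx.1; positivity
        exact this.ne'
    exact hco.aestronglyMeasurable measurableSet_Ioo
  -- integrable bound
  have hint2 : IntegrableOn (fun u : ℝ => u ^ ((γ-1) * (-(δ*q)))) (Set.Ioo 0 1) := by
    have ha : (-1:ℝ) < (γ-1) * (-(δ*q)) := by nlinarith
    have h := intervalIntegral.intervalIntegrable_rpow' (a := (0:ℝ)) (b := 1) ha
    rw [intervalIntegrable_iff, uIoc_of_le (by norm_num : (0:ℝ) ≤ 1)] at h
    exact h.mono_set Set.Ioo_subset_Ioc_self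
  have hB : IntegrableOn
      (fun u => |k 1 u| ^ (1+ε) / p + γ ^ (-(δ*q)) * u ^ ((γ-1) * (-(δ*q))) / q)
      (Set.Ioo (0:ℝ) 1) :=
    (hkL.div_const p).add (((hint2.const_mul _).div_const q))
  apply hB.mono' (hh1.mul hh2)
  rw [ae_restrict_iff' measurableSet_Ioo]
  refine Filter.Eventually.of_forall fun u hu => ?_
  obtain ⟨hu0, hu1⟩ := hu
  have hA : 0 < γ * u ^ (γ-1) := by positivity
  have hnn : 0 ≤ |k 1 u| ^ (1+δ) * (γ * u ^ (γ-1)) ^ (-δ) := by positivity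
  simp only [Pi.mul_apply]
  rw [Real.norm_eq_abs, abs_of_nonneg hnn]
  have hY := Real.young_inequality_of_nonneg
    (Real.rpow_nonneg (abs_nonneg (k 1 u)) (1+δ)) (Real.rpow_nonneg hA.le (-δ)) hpq
  have eA : (|k 1 u| ^ (1+δ)) ^ p = |k 1 u| ^ (1+ε) := by
    rw [← Real.rpow_mul (abs_nonneg _), hpd]
  have eB : ((γ * u ^ (γ-1)) ^ (-δ)) ^ q = γ ^ (-(δ*q)) * u ^ ((γ-1) * (-(δ*q))) := by
    rw [← Real.rpow_mul hA.le, Real.mul_rpow hγ0.le (Real.rpow_nonneg hu0.le _),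
      ← Real.rpow_mul hu0.le]
    ring_nf
  rw [eA, eB] at hY
  exact hY
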